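/- With Tᵢ(αᵢ) independent as defined, for every integer ℓ ≥ 1 one has Q_{2ℓ}(T₁(α₁)+⋯+Tₙ(αₙ)) = P(T₁(α₁)+⋯+Tₙ(αₙ) ∈ (-ℓ, ℓ]); that is, the supremum in the concentration function is attained at the interval (-ℓ, ℓ] symmetric about the origin. -/

import Mathlib

open MeasureTheory ProbabilityTheory
open scoped ENNReal NNReal

/-- The Lévy concentration function `Q_h(μ) = sup_x μ((x, x+h])`. -/
noncomputable def conc (μ : Measure ℝ) (h : ℝ) : ℝ≥0∞ :=
  ⨆ x : ℝ, μ (Set.Ioc x (x + h))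

/-- `nu k` is the uniform distribution on the arithmetic progression `{-k+1, -k+3, …, k-1}`. -/
noncomputable def nu (k : ℕ) : Measure ℝ :=
  (k : ℝ≥0∞)⁻¹ • ∑ i ∈ Finset.range k, Measure.dirac (2 * (i : ℝ) - k + 1)

instance nu_fin (k : ℕ) : IsFiniteMeasure (nu k) := by
  constructor
  rw [nu, Measure.smul_apply, Measure.coe_finset_sum, Finset.sum_apply]
  simp only [Measure.dirac_apply' _ MeasurableSet.univ, Set.indicator_univ, Pi.one_apply,
    Finset.sum_const, Finset.card_range, smul_eq_mul, nsmul_eq_mul, mul_one]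
  rcases Nat.eq_zero_or_pos k with h | h
  · simp [h]
  · rw [ENNReal.inv_mul_cancel (by exact_mod_cast h.ne' : (k:ℝ≥0∞) ≠ 0) (by simp)]
    exact ENNReal.one_lt_top


/-- The law of `T(α)`: for `α ∈ [1/(k+1), 1/k]` (with `k = ⌊1/α⌋`), the mixture
`(1-τ)·ν^{k+1} + τ·ν^k` where `τ = k(k+1)α - k`. -/
noncomputable def Tdist (α : ℝ) : Measure ℝ :=
  ENNReal.ofReal (1 - ((⌊1/α⌋₊ : ℝ) * (⌊1/α⌋₊ + 1) * α - ⌊1/α⌋₊)) • nu (⌊1/α⌋₊ + 1)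
    + ENNReal.ofReal ((⌊1/α⌋₊ : ℝ) * (⌊1/α⌋₊ + 1) * α - ⌊1/α⌋₊) • nu ⌊1/α⌋₊

instance Tdist_fin (α : ℝ) : IsFiniteMeasure (Tdist α) := by
  constructor
  rw [Tdist, Measure.add_apply, Measure.smul_apply, Measure.smul_apply, smul_eq_mul, smul_eq_mul]
  exact ENNReal.add_lt_top.2 ⟨ENNReal.mul_lt_top ENNReal.ofReal_lt_top (measure_lt_top _ _),
    ENNReal.mul_lt_top ENNReal.ofReal_lt_top (measure_lt_top _ _)⟩

noncomputable def dd (f : ℤ → ℝ≥0∞) : Measure ℝ :=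
  Measure.sum fun m : ℤ => f m • Measure.dirac (m : ℝ)

instance dd_sfinite (f : ℤ → ℝ≥0∞) : SFinite (dd f) := by unfold dd; infer_instance

lemma dd_apply (f : ℤ → ℝ≥0∞) {s : Set ℝ} (hs : MeasurableSet s) :
    dd f s = ∑' m : ℤ, f m * s.indicator 1 (m : ℝ) := by
  rw [dd, Measure.sum_apply _ hs]
  refine tsum_congr fun m => ?_
  rw [Measure.smul_apply, Measure.dirac_apply' _ hs, smul_eq_mul]

noncomputable def nup (k : ℕ) : ℤ → ℝ≥0∞ := fun m =>
  (k : ℝ≥0∞)⁻¹ * ∑ i ∈ Finset.range k, if m = 2 * (i : ℤ) - k + 1 then 1 else 0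

lemma tsum_ite_mul (c : ℤ) (g : ℤ → ℝ≥0∞) :
    ∑' m : ℤ, (if m = c then (1 : ℝ≥0∞) else 0) * g m = g c := by
  rw [tsum_eq_single c (fun b hb => by simp [hb])]
  simp

lemma nu_eq_dd (k : ℕ) : nu k = dd (nup k) := by
  ext s hs
  rw [dd_apply _ hs, nu, Measure.smul_apply, Measure.coe_finset_sum, Finset.sum_apply,
    smul_eq_mul]
  have h1 : ∀ m : ℤ, nup k m * s.indicator 1 (m : ℝ)
      = (k : ℝ≥0∞)⁻¹ * ∑ i ∈ Finset.range k,
          (if m = 2 * (i : ℤ) - k + 1 then (1 : ℝ≥0∞) else 0) * s.indicator 1 (m : ℝ) := by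
    intro m
    rw [nup, mul_assoc, Finset.sum_mul]
  rw [tsum_congr h1, ENNReal.tsum_mul_left]
  congr 1
  rw [Summable.tsum_finsetSum (fun i _ => ENNReal.summable)]
  refine Finset.sum_congr rfl fun i _ => ?_
  rw [tsum_ite_mul]
  rw [Measure.dirac_apply' _ hs]
  norm_num

lemma dd_mix (c d : ℝ≥0∞) (f g : ℤ → ℝ≥0∞) :
    dd (fun m => c * f m + d * g m) = c • dd f + d • dd g := by
  ext s hs
  simp only [Measure.add_apply, Measure.smul_apply, smul_eq_mul, dd_apply _ hs]
  rw [← ENNReal.tsum_mul_left, ← ENNReal.tsum_mul_left, ← ENNReal.tsum_add]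
  exact tsum_congr fun m => by ring

noncomputable def tp (α : ℝ) : ℤ → ℝ≥0∞ := fun m =>
  ENNReal.ofReal (1 - ((⌊1/α⌋₊ : ℝ) * (⌊1/α⌋₊ + 1) * α - ⌊1/α⌋₊)) * nup (⌊1/α⌋₊ + 1) m
    + ENNReal.ofReal ((⌊1/α⌋₊ : ℝ) * (⌊1/α⌋₊ + 1) * α - ⌊1/α⌋₊) * nup ⌊1/α⌋₊ m

lemma Tdist_eq_dd (α : ℝ) : Tdist α = dd (tp α) := by
  rw [Tdist, nu_eq_dd, nu_eq_dd, ← dd_mix]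
  rfl

noncomputable def conv (f g : ℤ → ℝ≥0∞) : ℤ → ℝ≥0∞ := fun m => ∑' a : ℤ, f a * g (m - a)

lemma conv_comm (f g : ℤ → ℝ≥0∞) : conv f g = conv g f := by
  funext m
  rw [conv, conv, ← Equiv.tsum_eq (Equiv.subLeft m) (fun a => f a * g (m - a))]
  exact tsum_congr fun b => by simp [mul_comm]

lemma conv_nup (f : ℤ → ℝ≥0∞) (k : ℕ) (m : ℤ) :
    conv f (nup k) m = (k : ℝ≥0∞)⁻¹ * ∑ i ∈ Finset.range k, f (m - 2 * (i : ℤ) + k - 1) := by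
  rw [conv]
  have h1 : ∀ a : ℤ, f a * nup k (m - a)
      = (k : ℝ≥0∞)⁻¹ * ∑ i ∈ Finset.range k,
          (if m - a = 2 * (i : ℤ) - k + 1 then f a else 0) := by
    intro a
    rw [nup, ← mul_assoc, mul_comm (f a), mul_assoc, Finset.mul_sum]
    congr 1
    exact Finset.sum_congr rfl fun i _ => by split <;> simp
  rw [tsum_congr h1, ENNReal.tsum_mul_left]
  congr 1
  rw [Summable.tsum_finsetSum (fun i _ => ENNReal.summable)]
  refine Finset.sum_congr rfl fun i _ => ?_
  rw [tsum_eq_single (m - 2 * (i : ℤ) + k - 1) (fun b hb => by rw [if_neg (by omega)])]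
  rw [if_pos (by omega)]

lemma prod_map_add (f g : ℤ → ℝ≥0∞) :
    ((dd f).prod (dd g)).map (fun p : ℝ × ℝ => p.1 + p.2) = dd (conv f g) := by
  have hadd : Measurable (fun p : ℝ × ℝ => p.1 + p.2) := measurable_fst.add measurable_snd
  ext s hs
  rw [Measure.map_apply hadd hs, Measure.prod_apply (hadd hs)]
  have hmeas : Measurable fun x : ℝ =>
      dd g (Prod.mk x ⁻¹' ((fun p : ℝ × ℝ => p.1 + p.2) ⁻¹' s)) :=
    measurable_measure_prodMk_left (hadd hs)
  conv_lhs => rw [dd, lintegral_sum_measure]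
  have h2 : ∀ m : ℤ, (∫⁻ x, dd g (Prod.mk x ⁻¹' ((fun p : ℝ × ℝ => p.1 + p.2) ⁻¹' s))
        ∂(f m • Measure.dirac (m : ℝ)))
      = f m * ∑' b : ℤ, g b * s.indicator 1 ((m : ℝ) + b) := by
    intro m
    rw [lintegral_smul_measure, lintegral_dirac' _ hmeas]
    congr 1
    have hp : (Prod.mk (m : ℝ) ⁻¹' ((fun p : ℝ × ℝ => p.1 + p.2) ⁻¹' s))
        = (fun y : ℝ => (m : ℝ) + y) ⁻¹' s := rfl
    rw [hp, dd_apply _ (hs.preimage (measurable_const_add _))]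
    refine tsum_congr fun b => ?_
    by_cases h : (m : ℝ) + b ∈ s <;> simp [Set.indicator_apply, h]
  rw [tsum_congr h2, dd_apply _ hs]
  have h3 : ∀ c : ℤ, conv f g c * s.indicator 1 (c : ℝ)
      = ∑' a : ℤ, f a * g (c - a) * s.indicator 1 (c : ℝ) := fun c => by
    rw [conv, ENNReal.tsum_mul_right]
  rw [tsum_congr h3, ENNReal.tsum_comm]
  refine tsum_congr fun a => ?_
  rw [← ENNReal.tsum_mul_left,
    ← Equiv.tsum_eq (Equiv.addLeft a) (fun c => f a * g (c - a) * s.indicator 1 (c : ℝ))]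
  refine tsum_congr fun b => ?_
  simp [mul_assoc]

noncomputable def sumpmf : ∀ {n : ℕ}, (Fin n → ℤ → ℝ≥0∞) → ℤ → ℝ≥0∞
  | 0, _ => fun m => if m = 0 then 1 else 0
  | _ + 1, f => conv (f 0) (sumpmf fun j => f j.succ)

lemma dd_delta : dd (fun m : ℤ => if m = 0 then (1 : ℝ≥0∞) else 0) = Measure.dirac (0 : ℝ) := by
  ext s hs
  rw [dd_apply _ hs, Measure.dirac_apply' _ hs,
    tsum_eq_single 0 (fun b hb => by simp [hb])]
  simp

lemma pi_map_sum : ∀ (n : ℕ) (μ : Fin n → Measure ℝ), (∀ i, IsFiniteMeasure (μ i)) →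
    ∀ (f : Fin n → ℤ → ℝ≥0∞), (∀ i, μ i = dd (f i)) →
    (Measure.pi μ).map (fun y => ∑ i, y i) = dd (sumpmf f)
  | 0, μ, hfin, f, h => by
    rw [Measure.pi_of_empty μ, Measure.map_dirac' (by fun_prop)]
    simp only [Finset.univ_eq_empty, Finset.sum_empty]
    rw [show sumpmf f = fun m : ℤ => if m = 0 then (1 : ℝ≥0∞) else 0 from rfl, dd_delta]
  | n + 1, μ, hfin, f, h => by
    haveI := hfin
    haveI : ∀ i, SigmaFinite (μ i) := fun i => inferInstance
    have hsum : Measurable fun y : Fin n → ℝ => ∑ i, y i :=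
      Finset.measurable_sum _ fun i _ => measurable_pi_apply i
    have hsum1 : Measurable fun y : Fin (n + 1) → ℝ => ∑ i, y i :=
      Finset.measurable_sum _ fun i _ => measurable_pi_apply i
    have hMP := (measurePreserving_piFinSuccAbove μ 0).map_eq
    have hIH : (Measure.pi fun j => μ ((0 : Fin (n+1)).succAbove j)).map
        (fun y : Fin n → ℝ => ∑ i, y i) = dd (sumpmf fun j => f j.succ) := by
      have := pi_map_sum n (fun j => μ ((0 : Fin (n+1)).succAbove j))
        (fun j => inferInstance) (fun j => f j.succ)
        (fun j => by rw [Fin.succAbove_zero]; exact h j.succ)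
      rw [← this]
    have hcomp : (fun y : Fin (n + 1) → ℝ => ∑ i, y i)
        = (fun p : ℝ × ℝ => p.1 + p.2) ∘ (Prod.map id (fun y : Fin n → ℝ => ∑ i, y i))
          ∘ (MeasurableEquiv.piFinSuccAbove (fun _ => ℝ) 0) := by
      funext y
      simp [MeasurableEquiv.piFinSuccAbove, Fin.sum_univ_succ, Fin.succAbove_zero, Fin.tail]
    rw [hcomp, ← Function.comp_assoc]
    rw [← Measure.map_map (by fun_prop) (MeasurableEquiv.piFinSuccAbove (fun _ => ℝ) 0).measurable]
    rw [hMP]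
    rw [← Measure.map_map (show Measurable (fun p : ℝ × ℝ => p.1 + p.2) from measurable_fst.add measurable_snd) (measurable_id.prodMap hsum)]
    rw [← Measure.map_prod_map _ _ measurable_id hsum, Measure.map_id, hIH, h 0]
    exact prod_map_add _ _

def Usym (f : ℤ → ℝ≥0∞) : Prop :=
  (∀ m, f (-m) = f m) ∧ (∀ m : ℤ, 0 ≤ m → f (m + 2) ≤ f m)

lemma Usym.anti {f : ℤ → ℝ≥0∞} (hf : Usym f) {a b : ℤ} (h1 : |a| ≤ b)
    (h2 : (2 : ℤ) ∣ b - a) : f b ≤ f a := by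
  have claim : ∀ (t : ℕ) (c : ℤ), 0 ≤ c → f (c + 2 * t) ≤ f c := by
    intro t
    induction t with
    | zero => simp
    | succ t ih =>
      intro c hc
      have he : c + 2 * ((t : ℤ) + 1) = (c + 2 * t) + 2 := by ring
      calc f (c + 2 * ((t : ℕ) + 1 : ℕ)) = f ((c + 2 * t) + 2) := by rw [← he]; push_cast; ring_nf
        _ ≤ f (c + 2 * t) := hf.2 _ (by positivity)
        _ ≤ f c := ih c hc
  have ha : f a = f |a| := by
    rcases abs_cases a with ⟨h, _⟩ | ⟨h, _⟩
    · rw [h]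
    · rw [h, hf.1]
  have h3 : ∃ t : ℕ, b = |a| + 2 * t := by
    obtain ⟨c, hc⟩ := h2
    rcases abs_cases a with ⟨h, h'⟩ | ⟨h, h'⟩
    · exact ⟨c.toNat, by omega⟩
    · refine ⟨(c + a).toNat, by omega⟩
  obtain ⟨t, ht⟩ := h3
  rw [ha, ht]
  exact claim t _ (abs_nonneg a)

lemma Usym.add {f g : ℤ → ℝ≥0∞} (c d : ℝ≥0∞) (hf : Usym f) (hg : Usym g) :
    Usym (fun m => c * f m + d * g m) := by
  constructor
  · intro m
    show c * f (-m) + d * g (-m) = c * f m + d * g m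
    rw [hf.1, hg.1]
  · intro m hm
    exact add_le_add (mul_le_mul_right (hf.2 m hm) c) (mul_le_mul_right (hg.2 m hm) d)

lemma usym_conv_nup {f : ℤ → ℝ≥0∞} (hf : Usym f) (k : ℕ) : Usym (conv f (nup k)) := by
  constructor
  · intro m
    rw [conv_nup, conv_nup]
    congr 1
    have h1 : ∀ i ∈ Finset.range k, f (-m - 2 * (i : ℤ) + k - 1)
        = f (m + 2 * (i : ℤ) - k + 1) := by
      intro i _
      rw [show (-m - 2 * (i : ℤ) + k - 1) = -(m + 2 * (i : ℤ) - k + 1) by ring, hf.1]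
    rw [Finset.sum_congr rfl h1, ← Finset.sum_range_reflect]
    refine Finset.sum_congr rfl fun i hi => ?_
    have hik : i < k := Finset.mem_range.1 hi
    congr 1
    have : ((k - 1 - i : ℕ) : ℤ) = (k : ℤ) - 1 - i := by omega
    rw [this]; ring
  · intro m hm
    rw [conv_nup, conv_nup]
    refine mul_le_mul_right ?_ _
    rcases k with _ | t
    · simp
    · push_cast
      have hL : ∀ i ∈ Finset.range (t + 1), f (m + 2 - 2 * (i : ℤ) + ((t : ℤ) + 1) - 1)
          = (fun i : ℕ => f (m - 2 * (i : ℤ) + (t : ℤ) + 2)) i := by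
        intro i _; congr 1; ring
      rw [Finset.sum_congr rfl hL, Finset.sum_range_succ', Finset.sum_range_succ]
      have he1 : ∀ i ∈ Finset.range t, f (m - 2 * ((i + 1 : ℕ) : ℤ) + (t : ℤ) + 2)
          = f (m - 2 * (i : ℤ) + ((t : ℤ) + 1) - 1) := by
        intro i _; congr 1; push_cast; ring
      rw [Finset.sum_congr rfl he1]
      refine add_le_add_right (hf.anti (abs_le.mpr (by constructor <;> omega)) (by omega)) _

lemma conv_mix (f g h : ℤ → ℝ≥0∞) (c d : ℝ≥0∞) :
    conv f (fun m => c * g m + d * h m) = fun m => c * conv f g m + d * conv f h m := by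
  funext m
  show ∑' a : ℤ, f a * (c * g (m - a) + d * h (m - a)) = _
  rw [conv, conv, ← ENNReal.tsum_mul_left, ← ENNReal.tsum_mul_left, ← ENNReal.tsum_add]
  exact tsum_congr fun a => by ring

lemma usym_sumpmf : ∀ (n : ℕ) (f : Fin n → ℤ → ℝ≥0∞), (∀ i, ∃ α : ℝ, f i = tp α) →
    Usym (sumpmf f)
  | 0, f, _ => by
    constructor
    · intro m
      show (if -m = 0 then (1 : ℝ≥0∞) else 0) = (if m = 0 then (1 : ℝ≥0∞) else 0)
      simp [neg_eq_zero]
    · intro m hm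
      show (if m + 2 = 0 then (1 : ℝ≥0∞) else 0) ≤ (if m = 0 then (1 : ℝ≥0∞) else 0)
      rw [if_neg (by omega)]
      exact zero_le
  | n + 1, f, h => by
    have hS := usym_sumpmf n (fun j => f j.succ) (fun j => h j.succ)
    obtain ⟨α, hα⟩ := h 0
    show Usym (conv (f 0) (sumpmf fun j => f j.succ))
    rw [conv_comm, hα]
    have htp : tp α = fun m =>
        ENNReal.ofReal (1 - ((⌊1/α⌋₊ : ℝ) * (⌊1/α⌋₊ + 1) * α - ⌊1/α⌋₊)) * nup (⌊1/α⌋₊ + 1) m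
          + ENNReal.ofReal ((⌊1/α⌋₊ : ℝ) * (⌊1/α⌋₊ + 1) * α - ⌊1/α⌋₊) * nup ⌊1/α⌋₊ m := rfl
    rw [htp, conv_mix]
    exact Usym.add _ _ (usym_conv_nup hS _) (usym_conv_nup hS _)

lemma window_le {f : ℤ → ℝ≥0∞} (hf : Usym f) (ℓ : ℕ) (hℓ : 1 ≤ ℓ) (a : ℤ) :
    ∑ j ∈ Finset.range (2 * ℓ), f (a + j) ≤
      ∑ j ∈ Finset.range (2 * ℓ), f (-(ℓ : ℤ) + 1 + j) := by
  set L := 2 * ℓ with hL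
  have step : ∀ b : ℤ, -(ℓ : ℤ) ≤ b →
      ∑ j ∈ Finset.range L, f ((b + 1) + j) ≤ ∑ j ∈ Finset.range L, f (b + j) := by
    intro b hb
    obtain ⟨M, hM⟩ : ∃ M, L = M + 1 := ⟨L - 1, by omega⟩
    rw [hM, Finset.sum_range_succ, Finset.sum_range_succ']
    have h1 : ∀ j ∈ Finset.range M, f (b + 1 + (j : ℤ)) = f (b + ((j + 1 : ℕ) : ℤ)) := by
      intro j _; congr 1; push_cast; ring
    rw [Finset.sum_congr rfl h1]
    exact add_le_add_right (hf.anti (abs_le.mpr (by constructor <;> omega)) (by omega)) _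
  have hrefl : ∀ b : ℤ, ∑ j ∈ Finset.range L, f (b + j)
      = ∑ j ∈ Finset.range L, f ((-b - L + 1) + j) := by
    intro b
    have h1 : ∀ j ∈ Finset.range L, f (b + (j : ℤ)) = f (-b - (j : ℤ)) := by
      intro j _
      rw [show -b - (j : ℤ) = -(b + j) by ring, hf.1]
    rw [Finset.sum_congr rfl h1, ← Finset.sum_range_reflect]
    refine Finset.sum_congr rfl fun j hj => ?_
    have hjL := Finset.mem_range.1 hj
    congr 1
    have hc : ((L - 1 - j : ℕ) : ℤ) = (L : ℤ) - 1 - j := by omega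
    rw [hc]; ring
  have chain : ∀ t : ℕ, ∑ j ∈ Finset.range L, f ((-(ℓ : ℤ) + 1 + t) + j) ≤
      ∑ j ∈ Finset.range L, f ((-(ℓ : ℤ) + 1) + j) := by
    intro t
    induction t with
    | zero => simp
    | succ t ih =>
      calc ∑ j ∈ Finset.range L, f ((-(ℓ : ℤ) + 1 + ((t + 1 : ℕ) : ℤ)) + j)
          = ∑ j ∈ Finset.range L, f (((-(ℓ : ℤ) + 1 + t) + 1) + j) := by
            refine Finset.sum_congr rfl fun j _ => ?_; congr 1; push_cast; ring
        _ ≤ ∑ j ∈ Finset.range L, f ((-(ℓ : ℤ) + 1 + t) + j) := step _ (by omega)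
        _ ≤ _ := ih
  rcases le_or_gt (-(ℓ : ℤ) + 1) a with hc | hc
  · have ha : a = -(ℓ : ℤ) + 1 + ((a - (-(ℓ : ℤ) + 1)).toNat : ℤ) := by omega
    rw [ha]
    exact chain _
  · rw [hrefl a]
    have h2 : -a - (L : ℤ) + 1 = -(ℓ : ℤ) + 1 + (((-a - (L : ℤ) + (ℓ : ℤ)).toNat : ℕ) : ℤ) := by
      omega
    rw [h2]
    exact chain _

lemma dd_Ioc (f : ℤ → ℝ≥0∞) (x : ℝ) (L : ℕ) :
    dd f (Set.Ioc x (x + L)) = ∑ j ∈ Finset.range L, f (⌊x⌋ + 1 + j) := by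
  rw [dd_apply _ measurableSet_Ioc]
  have key : ∀ m : ℤ, f m * (Set.Ioc x (x + L)).indicator 1 (m : ℝ)
      = if m ∈ Finset.Icc (⌊x⌋ + 1) (⌊x⌋ + L) then f m else 0 := by
    intro m
    have hmem : (m : ℝ) ∈ Set.Ioc x (x + L) ↔ m ∈ Finset.Icc (⌊x⌋ + 1) (⌊x⌋ + L) := by
      rw [Set.mem_Ioc, Finset.mem_Icc]
      constructor
      · rintro ⟨h1, h2⟩
        have e1 : ⌊x⌋ + 1 ≤ m := by rw [Int.add_one_le_iff, Int.floor_lt]; exact h1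
        have e2 : m - L ≤ ⌊x⌋ := Int.le_floor.mpr (by push_cast; linarith)
        exact ⟨e1, by omega⟩
      · rintro ⟨h1, h2⟩
        have e1 : x < m := Int.floor_lt.mp (by omega)
        have h'' : ((m - L : ℤ) : ℝ) ≤ ((⌊x⌋ : ℤ) : ℝ) := by
          exact_mod_cast (by omega : (m - L : ℤ) ≤ ⌊x⌋)
        have e2 := h''.trans (Int.floor_le x)
        push_cast at e2
        exact ⟨e1, by linarith⟩
    by_cases h : m ∈ Finset.Icc (⌊x⌋ + 1) (⌊x⌋ + L)
    · rw [if_pos h, Set.indicator_of_mem (hmem.mpr h), Pi.one_apply, mul_one]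
    · rw [if_neg h, Set.indicator_of_notMem (fun hmm => h (hmem.mp hmm)), mul_zero]
  rw [tsum_congr key, tsum_eq_sum (s := Finset.Icc (⌊x⌋ + 1) (⌊x⌋ + L))
    (fun b hb => by rw [if_neg hb])]
  rw [Finset.sum_congr rfl (fun m hm => if_pos hm)]
  refine Finset.sum_nbij' (fun m => (m - (⌊x⌋ + 1)).toNat) (fun j => ⌊x⌋ + 1 + j) ?_ ?_ ?_ ?_ ?_
  all_goals
    simp only [Finset.mem_Icc, Finset.mem_range]
    intro a ha
  · omega
  · omega
  · omega
  · omega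
  · congr 1; omega

/-- For independent Tᵢ(αᵢ) the concentration function Q_{2ℓ} is attained at the
symmetric interval (-ℓ, ℓ]. -/
theorem conc_Tsum_attained (n : ℕ) (α : Fin n → ℝ) (hα : ∀ i, α i ∈ Set.Ioc (0 : ℝ) 1)
    (ℓ : ℕ) (hℓ : 1 ≤ ℓ) :
    conc ((Measure.pi fun i : Fin n => Tdist (α i)).map (fun y => ∑ i, y i)) (2 * ℓ) =
      (Measure.pi fun i : Fin n => Tdist (α i))
        {y | (∑ i, y i) ∈ Set.Ioc (-(ℓ : ℝ)) ℓ} := by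
  have hsum : Measurable fun y : Fin n → ℝ => ∑ i, y i :=
    Finset.measurable_sum _ fun i _ => measurable_pi_apply i
  have hmap : (Measure.pi fun i : Fin n => Tdist (α i)).map (fun y => ∑ i, y i)
      = dd (sumpmf fun i => tp (α i)) :=
    pi_map_sum n _ (fun i => inferInstance) _ (fun i => Tdist_eq_dd (α i))
  have hU : Usym (sumpmf fun i : Fin n => tp (α i)) :=
    usym_sumpmf n _ (fun i => ⟨α i, rfl⟩)
  set F := sumpmf fun i : Fin n => tp (α i) with hF
  have hfloor : ⌊-(ℓ : ℝ)⌋ = -(ℓ : ℤ) := by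
    rw [show -(ℓ : ℝ) = ((-(ℓ : ℤ) : ℤ) : ℝ) by push_cast; ring, Int.floor_intCast]
  have hcenter : dd F (Set.Ioc (-(ℓ : ℝ)) ℓ)
      = ∑ j ∈ Finset.range (2 * ℓ), F (-(ℓ : ℤ) + 1 + j) := by
    have h1 : Set.Ioc (-(ℓ : ℝ)) (ℓ : ℝ)
        = Set.Ioc (-(ℓ : ℝ)) (-(ℓ : ℝ) + ((2 * ℓ : ℕ) : ℝ)) := by
      congr 1; push_cast; ring
    rw [h1, dd_Ioc, hfloor]
  have hRHS : (Measure.pi fun i : Fin n => Tdist (α i))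
      {y | (∑ i, y i) ∈ Set.Ioc (-(ℓ : ℝ)) ℓ} = dd F (Set.Ioc (-(ℓ : ℝ)) ℓ) := by
    rw [show {y : Fin n → ℝ | (∑ i, y i) ∈ Set.Ioc (-(ℓ : ℝ)) ℓ}
        = (fun y : Fin n → ℝ => ∑ i, y i) ⁻¹' Set.Ioc (-(ℓ : ℝ)) ℓ from rfl,
      ← Measure.map_apply hsum measurableSet_Ioc, hmap]
  rw [hRHS, conc, hmap]
  refine le_antisymm (iSup_le fun x => ?_) ?_
  · have hx : Set.Ioc x (x + 2 * (ℓ : ℝ)) = Set.Ioc x (x + ((2 * ℓ : ℕ) : ℝ)) := by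
      congr 1; push_cast; ring
    rw [hx, dd_Ioc, hcenter]
    exact window_le hU ℓ hℓ _
  · refine le_iSup_of_le (-(ℓ : ℝ)) (le_of_eq ?_)
    congr 1
    congr 1
    ring
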